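/- Let X_{1,λ}, …, X_{k,λ} be independent degenerate zero-truncated Poisson random variables each with parameter α > 0 and X_λ = ∑ X_{i,λ}. Then for n ≥ k, P(X_λ = n) = (α^n / (n! (e_λ(α)−1)^k)) ∑_{l=0}^{k} C(k,l)(−1)^{k−l}(l)_{n,λ}. -/

import Mathlib

open Real Filter Finset

/-- λ-falling factorial (x)_{n,λ} = x(x-λ)⋯(x-(n-1)λ). -/
noncomputable def dfall (lam x : ℝ) (n : ℕ) : ℝ := ∏ j ∈ Finset.range n, (x - j * lam)

/-- degenerate exponential e_λ(t) = (1+λt)^{1/λ}. -/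
noncomputable def dexp (lam t : ℝ) : ℝ := (1 + lam * t) ^ (1 / lam)

/-- PMF of the degenerate zero-truncated Poisson random variable (for n ≥ 1). -/
noncomputable def ztP (lam a : ℝ) (n : ℕ) : ℝ :=
  1 / (dexp lam a - 1) * (a ^ n / (Nat.factorial n : ℝ)) * dfall lam 1 n


lemma dfall_zero (lam x : ℝ) : dfall lam x 0 = 1 := by simp [dfall]

lemma dfall_succ (lam x : ℝ) (n : ℕ) :
    dfall lam x (n + 1) = dfall lam x n * (x - n * lam) := by
  simp [dfall, Finset.prod_range_succ]

lemma dfall_zero_left (lam : ℝ) {n : ℕ} (hn : 1 ≤ n) : dfall lam 0 n = 0 := by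
  apply Finset.prod_eq_zero (Finset.mem_range.2 hn)
  simp

/-- Vandermonde for λ-falling factorials. -/
lemma dfall_add (lam x y : ℝ) : ∀ n : ℕ, dfall lam (x + y) n
    = ∑ m ∈ Finset.range (n + 1),
        (n.choose m : ℝ) * dfall lam x m * dfall lam y (n - m) := by
  intro n
  induction n with
  | zero => simp [dfall]
  | succ n ih =>
    have key : ∀ m ∈ Finset.range (n + 1),
        (n.choose m : ℝ) * dfall lam x m * dfall lam y (n - m) * (x + y - n * lam)
        = ((n.choose m : ℝ) * dfall lam x (m + 1) * dfall lam y (n - m)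
          + (n.choose m : ℝ) * dfall lam x m * dfall lam y (n + 1 - m)) := by
      intro m hm
      have hm' : m ≤ n := Nat.lt_succ_iff.1 (Finset.mem_range.1 hm)
      have h1 : dfall lam x (m + 1) = dfall lam x m * (x - m * lam) := dfall_succ ..
      have h2 : dfall lam y (n + 1 - m) = dfall lam y (n - m) * (y - (n - m : ℕ) * lam) := by
        rw [show n + 1 - m = (n - m) + 1 by omega, dfall_succ]
      have h3 : ((n - m : ℕ) : ℝ) = (n : ℝ) - m := by
        push_cast [Nat.cast_sub hm']; ring
      rw [h1, h2, h3]; ring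
    rw [dfall_succ, ih, Finset.sum_mul, Finset.sum_congr rfl key, Finset.sum_add_distrib]
    -- now RHS target
    rw [Finset.sum_range_succ' (fun m => ((n+1).choose m : ℝ) * dfall lam x m
        * dfall lam y (n + 1 - m)) (n + 1)]
    have pasc : ∀ m ∈ Finset.range (n + 1),
        (((n+1).choose (m+1) : ℝ)) * dfall lam x (m+1) * dfall lam y (n + 1 - (m+1))
        = (n.choose m : ℝ) * dfall lam x (m+1) * dfall lam y (n - m)
          + (n.choose (m+1) : ℝ) * dfall lam x (m+1) * dfall lam y (n - m) := by
      intro m hm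
      have : (n+1).choose (m+1) = n.choose m + n.choose (m+1) := Nat.choose_succ_succ ..
      rw [this, show n + 1 - (m+1) = n - m by omega]
      push_cast; ring
    rw [Finset.sum_congr rfl pasc, Finset.sum_add_distrib]
    have hB : ∑ m ∈ Finset.range (n+1), (n.choose (m+1) : ℝ) * dfall lam x (m+1)
          * dfall lam y (n - m)
        + ((n+1).choose 0 : ℝ) * dfall lam x 0 * dfall lam y (n + 1 - 0)
        = ∑ m ∈ Finset.range (n+1), (n.choose m : ℝ) * dfall lam x m
          * dfall lam y (n + 1 - m) := by
      have := Finset.sum_range_succ' (fun m => (n.choose m : ℝ) * dfall lam x m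
          * dfall lam y (n + 1 - m)) (n + 1)
      rw [Finset.sum_range_succ] at this
      simp only [Nat.choose_succ_self, Nat.cast_zero, zero_mul, add_zero] at this
      rw [this]
      congr 1
      · apply Finset.sum_congr rfl
        intro m hm
        rw [show n + 1 - (m + 1) = n - m by omega]
      · simp
    rw [← hB]
    ring

noncomputable def Tf (lam : ℝ) (k n : ℕ) : ℝ :=
  ∑ l ∈ Finset.range (k + 1), (k.choose l : ℝ) * (-1) ^ (k - l) * dfall lam l n

lemma Tf_succ (lam : ℝ) (k n : ℕ) :
    Tf lam (k + 1) n = ∑ m ∈ Finset.range n,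
      ((n.choose (m+1) : ℝ)) * dfall lam 1 (m+1) * Tf lam k (n - (m+1)) := by
  have hU : ∑ l ∈ Finset.range (k + 1), (k.choose l : ℝ) * (-1) ^ (k - l)
        * dfall lam ((l : ℝ) + 1) n
      = ∑ m ∈ Finset.range (n + 1), (n.choose m : ℝ) * dfall lam 1 m * Tf lam k (n - m) := by
    have h1 : ∀ l ∈ Finset.range (k + 1),
        (k.choose l : ℝ) * (-1) ^ (k - l) * dfall lam ((l : ℝ) + 1) n
        = ∑ m ∈ Finset.range (n + 1), (n.choose m : ℝ) * dfall lam 1 m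
            * ((k.choose l : ℝ) * (-1) ^ (k - l) * dfall lam l (n - m)) := by
      intro l _
      rw [show ((l : ℝ) + 1) = 1 + l by ring, dfall_add, Finset.mul_sum]
      exact Finset.sum_congr rfl fun m _ => by ring
    rw [Finset.sum_congr rfl h1, Finset.sum_comm]
    refine Finset.sum_congr rfl fun m _ => ?_
    rw [Tf, Finset.mul_sum]
  -- step 1 : Tf (k+1) n = U - Tf k n
  have expand : Tf lam k n
      = ∑ l ∈ Finset.range (k + 1), (k.choose (l+1) : ℝ) * (-1) ^ (k - (l+1))
          * dfall lam (↑(l+1) : ℝ) n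
        + (k.choose 0 : ℝ) * (-1) ^ (k - 0) * dfall lam 0 n := by
    rw [Tf]
    have := Finset.sum_range_succ' (fun l => (k.choose l : ℝ) * (-1) ^ (k - l)
        * dfall lam l n) (k + 1)
    rw [Finset.sum_range_succ] at this
    simp only [Nat.choose_succ_self, Nat.cast_zero, CharP.cast_eq_zero, zero_mul,
      add_zero] at this
    exact this
  have step1 : Tf lam (k + 1) n
      = (∑ l ∈ Finset.range (k + 1), (k.choose l : ℝ) * (-1) ^ (k - l)
          * dfall lam ((l : ℝ) + 1) n) - Tf lam k n := by
    rw [Tf, Finset.sum_range_succ' (fun l => ((k+1).choose l : ℝ) * (-1) ^ (k + 1 - l)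
        * dfall lam l n) (k + 1)]
    have h2 : ∀ l ∈ Finset.range (k + 1),
        (((k+1).choose (l+1) : ℝ)) * (-1) ^ (k + 1 - (l+1)) * dfall lam (↑(l+1)) n
        = (k.choose l : ℝ) * (-1) ^ (k - l) * dfall lam ((l : ℝ) + 1) n
          + (k.choose (l+1) : ℝ) * (-1) ^ (k - l) * dfall lam ((l : ℝ) + 1) n := by
      intro l _
      rw [Nat.choose_succ_succ, show k + 1 - (l + 1) = k - l by omega]
      push_cast; ring
    rw [Finset.sum_congr rfl h2, Finset.sum_add_distrib]
    have key : ∀ l ∈ Finset.range (k + 1), (k.choose (l+1) : ℝ) * (-1) ^ (k - l)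
          * dfall lam ((l : ℝ) + 1) n
        = - ((k.choose (l+1) : ℝ) * (-1) ^ (k - (l+1)) * dfall lam (↑(l+1) : ℝ) n) := by
      intro l hl
      have hlk : l ≤ k := Nat.lt_succ_iff.1 (Finset.mem_range.1 hl)
      rcases Nat.lt_or_ge l k with h | h
      · rw [show k - l = (k - (l+1)) + 1 by omega]
        push_cast; ring
      · have : l = k := le_antisymm hlk h
        subst this
        simp [Nat.choose_succ_self]
    rw [add_assoc]
    rw [show ∑ l ∈ Finset.range (k + 1), (k.choose (l+1) : ℝ) * (-1) ^ (k - l)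
          * dfall lam ((l : ℝ) + 1) n
        + ((k+1).choose 0 : ℝ) * (-1) ^ (k + 1 - 0) * dfall lam ((0:ℕ) : ℝ) n
        = - Tf lam k n from ?_]
    · ring
    · rw [Finset.sum_congr rfl key, Finset.sum_neg_distrib, expand]
      simp only [Nat.sub_zero, Nat.choose_zero_right, Nat.cast_one, Nat.cast_zero,
        CharP.cast_eq_zero]
      push_cast
      ring
  rw [step1, hU]
  rw [Finset.sum_range_succ' (fun m => (n.choose m : ℝ) * dfall lam 1 m * Tf lam k (n - m)) n]
  simp [dfall_zero]

/-- termwise algebra in the convolution step -/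
lemma conv_term (a E u v : ℝ) {n r j : ℕ} (hr : r ≤ n) (hr1 : 1 ≤ r) :
    a ^ (n - r) / ((Nat.factorial (n - r) : ℝ) * E ^ j) * u
      * (1 / E * (a ^ r / (Nat.factorial r : ℝ)) * v)
    = a ^ n / ((Nat.factorial n : ℝ) * E ^ (j + 1)) * ((n.choose r : ℝ) * v * u) := by
  have hbin : ((n.choose r : ℝ)) * (Nat.factorial r : ℝ) * (Nat.factorial (n - r) : ℝ)
      = (Nat.factorial n : ℝ) := by
    exact_mod_cast congrArg (Nat.cast : ℕ → ℝ) (Nat.choose_mul_factorial_mul_factorial hr)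
  have h1 : a ^ (n - r) * a ^ r = a ^ n := by
    rw [← pow_add]; congr 1; omega
  rcases eq_or_ne E 0 with hE | hE
  · simp [hE, pow_succ]
  · have hfr : (Nat.factorial r : ℝ) ≠ 0 := by positivity
    have hfnr : (Nat.factorial (n - r) : ℝ) ≠ 0 := by positivity
    have hfn : (Nat.factorial n : ℝ) ≠ 0 := by positivity
    field_simp
    rw [← h1, ← hbin]
    ring

theorem stmt12 {Ω : Type*} [MeasurableSpace Ω] (μ : MeasureTheory.Measure Ω)
    [MeasureTheory.IsProbabilityMeasure μ] (lam a : ℝ) (ha : 0 < a) (k : ℕ) (hk : 1 ≤ k)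
    (X : Fin k → Ω → ℕ) (hmeas : ∀ i, Measurable (X i))
    (hindep : ProbabilityTheory.iIndepFun X μ)
    (hpmf : ∀ i, ∀ m : ℕ, 1 ≤ m → (μ {ω | X i ω = m}).toReal = ztP lam a m)
    (hzero : ∀ i, μ {ω | X i ω = 0} = 0) :
    ∀ n : ℕ, k ≤ n → (μ {ω | ∑ i, X i ω = n}).toReal
      = a ^ n / ((Nat.factorial n : ℝ) * (dexp lam a - 1) ^ k) *
          ∑ l ∈ Finset.range (k + 1), (Nat.choose k l : ℝ) * (-1) ^ (k - l) * dfall lam l n := by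
  have key : ∀ j : ℕ, 1 ≤ j → j ≤ k → ∀ n : ℕ,
      (μ {ω | ∑ i ∈ Finset.univ.filter (fun i : Fin k => (i : ℕ) < j), X i ω = n}).toReal
      = a ^ n / ((Nat.factorial n : ℝ) * (dexp lam a - 1) ^ j) * Tf lam j n := by
    intro j hj1
    induction j, hj1 using Nat.le_induction with
    | base =>
      intro _ n
      have h0k : 0 < k := hk
      have hset : Finset.univ.filter (fun i : Fin k => (i : ℕ) < 1) = {(⟨0, h0k⟩ : Fin k)} := by
        ext i
        simp [Fin.ext_iff, Nat.lt_one_iff]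
      rw [hset]
      simp only [Finset.sum_singleton]
      rcases Nat.eq_zero_or_pos n with hn | hn
      · subst hn
        rw [hzero ⟨0, h0k⟩]
        simp [Tf, Finset.sum_range_succ, dfall_zero]
      · rw [hpmf ⟨0, h0k⟩ n hn, ztP]
        have : Tf lam 1 n = dfall lam 1 n := by
          simp [Tf, Finset.sum_range_succ, dfall_zero_left lam hn]
        rw [this, pow_one, div_eq_mul_inv (a ^ n) ((Nat.factorial n : ℝ) * (dexp lam a - 1)), mul_inv]
        ring
    | succ j hj1 ih =>
      intro hjk n
      have hjk' : j < k := hjk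
      have hjle : j ≤ k := le_of_lt hjk'
      set i0 : Fin k := ⟨j, hjk'⟩ with hi0
      set s : Finset (Fin k) := Finset.univ.filter (fun i : Fin k => (i : ℕ) < j) with hs
      have hi0s : i0 ∉ s := by simp [hs, hi0]
      have hins : Finset.univ.filter (fun i : Fin k => (i : ℕ) < j + 1) = insert i0 s := by
        ext i
        simp only [Finset.mem_filter, Finset.mem_univ, true_and, Finset.mem_insert, hs, hi0]
        constructor
        · intro h
          rcases Nat.lt_succ_iff_lt_or_eq.1 h with h | h
          · right; simpa using h
          · left; exact Fin.ext h
        · rintro (rfl | h)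
          · simp
          · omega
      -- the partial-sum function
      set S : Ω → ℕ := fun ω => ∑ i ∈ s, X i ω with hS
      have hSmeas : Measurable S := Finset.measurable_sum s fun i _ => hmeas i
      have hSfun : S = ∑ i ∈ s, X i := by
        funext ω; simp [hS, Finset.sum_apply]
      have hSX : ProbabilityTheory.IndepFun S (X i0) μ := by
        rw [hSfun]
        exact hindep.indepFun_finset_sum_of_notMem hmeas hi0s
      -- decompose the event
      have hev : {ω | ∑ i ∈ Finset.univ.filter (fun i : Fin k => (i : ℕ) < j + 1), X i ω = n}
          = ⋃ m ∈ Finset.range (n + 1), (S ⁻¹' {n - m} ∩ (X i0) ⁻¹' {m}) := by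
        ext ω
        simp only [hins, Finset.sum_insert hi0s, Set.mem_setOf_eq, Set.mem_iUnion,
          Set.mem_inter_iff, Set.mem_preimage, Set.mem_singleton_iff, Finset.mem_range, hS]
        constructor
        · intro h
          exact ⟨X i0 ω, by omega, by omega, rfl⟩
        · rintro ⟨m, hm, h1, h2⟩
          omega
      rw [hev, MeasureTheory.measure_biUnion_finset]
      rotate_left
      · intro m₁ _ m₂ _ hne
        apply Set.disjoint_left.2
        rintro ω ⟨_, h1⟩ ⟨_, h2⟩
        exact hne (h1 ▸ h2 ▸ rfl)
      · intro m _
        exact (hSmeas (measurableSet_singleton _)).inter ((hmeas i0) (measurableSet_singleton _))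
      rw [ENNReal.toReal_sum (fun m _ => MeasureTheory.measure_ne_top μ _)]
      have hterm : ∀ m ∈ Finset.range (n + 1),
          (μ (S ⁻¹' {n - m} ∩ (X i0) ⁻¹' {m})).toReal
          = (μ (S ⁻¹' {n - m})).toReal * (μ ((X i0) ⁻¹' {m})).toReal := by
        intro m _
        rw [hSX.measure_inter_preimage_eq_mul _ _ (measurableSet_singleton _)
          (measurableSet_singleton _), ENNReal.toReal_mul]
      rw [Finset.sum_congr rfl hterm]
      -- peel off m = 0
      rw [Finset.sum_range_succ' (fun m => (μ (S ⁻¹' {n - m})).toReal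
        * (μ ((X i0) ⁻¹' {m})).toReal) n]
      have hz0 : (μ ((X i0) ⁻¹' {0})).toReal = 0 := by
        have : (X i0) ⁻¹' {0} = {ω | X i0 ω = 0} := by ext ω; simp
        rw [this, hzero i0, ENNReal.toReal_zero]
      rw [hz0, mul_zero, add_zero]
      have hterm2 : ∀ m ∈ Finset.range n,
          (μ (S ⁻¹' {n - (m + 1)})).toReal * (μ ((X i0) ⁻¹' {m + 1})).toReal
          = a ^ n / ((Nat.factorial n : ℝ) * (dexp lam a - 1) ^ (j + 1)) *
              ((n.choose (m + 1) : ℝ) * dfall lam 1 (m + 1) * Tf lam j (n - (m + 1))) := by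
        intro m hm
        have hmn : m + 1 ≤ n := Finset.mem_range.1 hm
        have hA : (μ (S ⁻¹' {n - (m + 1)})).toReal
            = a ^ (n - (m + 1)) / ((Nat.factorial (n - (m + 1)) : ℝ)
                * (dexp lam a - 1) ^ j) * Tf lam j (n - (m + 1)) := by
          have : S ⁻¹' {n - (m + 1)} = {ω | ∑ i ∈ s, X i ω = n - (m + 1)} := by
            ext ω; simp [hS]
          rw [this]
          exact ih hjle (n - (m + 1))
        have hB : (μ ((X i0) ⁻¹' {m + 1})).toReal = ztP lam a (m + 1) := by
          have : (X i0) ⁻¹' {m + 1} = {ω | X i0 ω = m + 1} := by ext ω; simp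
          rw [this]
          exact hpmf i0 (m + 1) (Nat.succ_le_succ (Nat.zero_le m))
        rw [hA, hB, ztP]
        exact conv_term a (dexp lam a - 1) (Tf lam j (n - (m+1))) (dfall lam 1 (m+1))
          hmn (Nat.succ_le_succ (Nat.zero_le m))
      rw [Finset.sum_congr rfl hterm2, ← Finset.mul_sum, ← Tf_succ]
  intro n hn
  have huniv : Finset.univ.filter (fun i : Fin k => (i : ℕ) < k) = Finset.univ := by
    ext i; simp [i.isLt]
  have := key k hk le_rfl n
  rw [huniv] at this
  rw [this, Tf]
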